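/- Every H-polytope A in ℝⁿ has only finitely many extreme points, and A is the convex hull of its set of extreme points. In particular, every H-polytope is a V-polytope. -/

import Mathlib

open RealInnerProductSpace

/-- An `H`-polyhedron: a finite intersection of closed half-spaces
`{x | ⟪aᵢ, x⟫ ≤ bᵢ}`. -/
def IsHPolyhedron {n : ℕ} (A : Set (EuclideanSpace ℝ (Fin n))) : Prop :=
  ∃ (p : ℕ) (a : Fin p → EuclideanSpace ℝ (Fin n)) (b : Fin p → ℝ),
    A = ⋂ i, {x : EuclideanSpace ℝ (Fin n) | ⟪a i, x⟫ ≤ b i}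

theorem extremePoints_finite_aux {n p : ℕ} (a : Fin p → EuclideanSpace ℝ (Fin n))
    (b : Fin p → ℝ) (A : Set (EuclideanSpace ℝ (Fin n)))
    (hA : A = ⋂ i, {x : EuclideanSpace ℝ (Fin n) | ⟪a i, x⟫ ≤ b i}) :
    (Set.extremePoints ℝ A).Finite := by
  have key : Set.InjOn (fun x => {i : Fin p | ⟪a i, x⟫ = b i}) (Set.extremePoints ℝ A) := by
    rintro x hx y hy hxy
    by_contra hne
    -- set up a small perturbation
    set d := y - x with hd
    have hdne : d ≠ 0 := sub_ne_zero.mpr (Ne.symm hne)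
    have hxA : x ∈ A := hx.1
    have hxmem : ∀ i, ⟪a i, x⟫ ≤ b i := by
      intro i
      have := hxA
      rw [hA] at this
      exact Set.mem_iInter.1 this i
    -- for active constraints, ⟪a i, d⟫ = 0
    have hact : ∀ i, ⟪a i, x⟫ = b i → ⟪a i, d⟫ = 0 := by
      intro i hi
      have hxy' : {j : Fin p | ⟪a j, x⟫ = b j} = {j : Fin p | ⟪a j, y⟫ = b j} := hxy
      have hyi : ⟪a i, y⟫ = b i := by
        have : i ∈ {j : Fin p | ⟪a j, y⟫ = b j} := by rw [← hxy']; exact hi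
        exact this
      simp [hd, inner_sub_right, hyi, hi]
    -- choose t
    set ε : Fin p → ℝ := fun i =>
      if ⟪a i, x⟫ = b i then 1 else (b i - ⟪a i, x⟫) / (|⟪a i, d⟫| + 1) with hε
    have hεpos : ∀ i, 0 < ε i := by
      intro i
      rw [hε]
      by_cases h : ⟪a i, x⟫ = b i
      · simp [h]
      · simp only [h, if_false]
        apply div_pos
        · exact sub_pos.mpr (lt_of_le_of_ne (hxmem i) h)
        · positivity
    set s : Finset ℝ := insert 1 (Finset.image ε Finset.univ) with hs
    have hsne : s.Nonempty := ⟨1, by simp [hs]⟩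
    set t := s.min' hsne with ht
    have htmem : t ∈ s := s.min'_mem hsne
    have htpos : 0 < t := by
      rw [hs] at htmem
      rcases Finset.mem_insert.1 htmem with h | h
      · rw [h]; norm_num
      · obtain ⟨i, _, hi⟩ := Finset.mem_image.1 h
        rw [← hi]; exact hεpos i
    have htle : ∀ i, t ≤ ε i := fun i =>
      s.min'_le _ (Finset.mem_insert_of_mem (Finset.mem_image_of_mem ε (Finset.mem_univ i)))
    -- the two perturbed points
    set z₁ := x + t • d with hz₁
    set z₂ := x - t • d with hz₂
    have hbound : ∀ i, |t * ⟪a i, d⟫| ≤ b i - ⟪a i, x⟫ := by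
      intro i
      by_cases h : ⟪a i, x⟫ = b i
      · simp [hact i h, h]
      · have hlt : ⟪a i, x⟫ < b i := lt_of_le_of_ne (hxmem i) h
        have h1 : t ≤ (b i - ⟪a i, x⟫) / (|⟪a i, d⟫| + 1) := by
          have h' := htle i
          rw [hε] at h'
          simp only at h'
          rwa [if_neg h] at h'
        have h2 : |t * ⟪a i, d⟫| = t * |⟪a i, d⟫| := by
          rw [abs_mul, abs_of_pos htpos]
        rw [h2]
        calc t * |⟪a i, d⟫| ≤ (b i - ⟪a i, x⟫) / (|⟪a i, d⟫| + 1) * |⟪a i, d⟫| := by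
              apply mul_le_mul_of_nonneg_right h1 (abs_nonneg _)
          _ ≤ b i - ⟪a i, x⟫ := by
              rw [div_mul_eq_mul_div, div_le_iff₀ (by positivity)]
              have : |⟪a i, d⟫| ≤ |⟪a i, d⟫| + 1 := by linarith
              nlinarith [abs_nonneg (⟪a i, d⟫ : ℝ), sub_pos.mpr hlt]
    have hz₁A : z₁ ∈ A := by
      rw [hA, Set.mem_iInter]
      intro i
      have : ⟪a i, z₁⟫ = ⟪a i, x⟫ + t * ⟪a i, d⟫ := by
        simp [hz₁, inner_add_right, inner_smul_right]
      have hb := hbound i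
      have := abs_le.1 hb
      simp only [Set.mem_setOf_eq]
      rw [‹⟪a i, z₁⟫ = _›]
      linarith [this.2]
    have hz₂A : z₂ ∈ A := by
      rw [hA, Set.mem_iInter]
      intro i
      have heq : ⟪a i, z₂⟫ = ⟪a i, x⟫ - t * ⟪a i, d⟫ := by
        simp [hz₂, inner_sub_right, inner_smul_right]
      have hb := abs_le.1 (hbound i)
      simp only [Set.mem_setOf_eq]
      rw [heq]
      linarith [hb.1]
    have hseg : x ∈ openSegment ℝ z₁ z₂ := by
      refine ⟨1/2, 1/2, by norm_num, by norm_num, by norm_num, ?_⟩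
      rw [hz₁, hz₂]
      module
    have := hx.2 hz₁A hz₂A hseg
    apply hdne
    have : t • d = 0 := by
      have h := this
      rw [hz₁] at h
      have : x + t • d = x + 0 := by rw [h]; simp
      exact add_left_cancel this
    exact (smul_eq_zero.1 this).resolve_left (ne_of_gt htpos)
  exact Set.Finite.of_finite_image (Set.toFinite _) key

/-- An `H`-polytope (a bounded `H`-polyhedron) has finitely many extreme points,
is the convex hull of its extreme points, and hence is a `V`-polytope. -/
theorem hPolytope_is_vPolytope (n : ℕ) (A : Set (EuclideanSpace ℝ (Fin n)))
    (hA : IsHPolyhedron A) (hbdd : Bornology.IsBounded A) :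
    (Set.extremePoints ℝ A).Finite ∧
    A = convexHull ℝ (Set.extremePoints ℝ A) ∧
    ∃ S : Set (EuclideanSpace ℝ (Fin n)), S.Finite ∧ A = convexHull ℝ S := by
  obtain ⟨p, a, b, hAeq⟩ := hA
  have hfin : (Set.extremePoints ℝ A).Finite := extremePoints_finite_aux a b A hAeq
  have hconv : Convex ℝ A := by
    rw [hAeq]
    exact convex_iInter fun i =>
      convex_halfSpace_le (𝕜 := ℝ) ⟨fun u v => inner_add_right _ _ _,
        fun c u => real_inner_smul_right _ _ _⟩ (b i)
  have hclosed : IsClosed A := by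
    rw [hAeq]
    exact isClosed_iInter fun i =>
      isClosed_le (innerSL ℝ (a i)).continuous continuous_const
  have hcomp : IsCompact A := Metric.isCompact_of_isClosed_isBounded hclosed hbdd
  have hKM := closure_convexHull_extremePoints hcomp hconv
  have hcl : IsClosed (convexHull ℝ (Set.extremePoints ℝ A)) :=
    (hfin.isCompact_convexHull (𝕜 := ℝ)).isClosed
  have heq : A = convexHull ℝ (Set.extremePoints ℝ A) :=
    hKM.symm.trans hcl.closure_eq
  exact ⟨hfin, heq, _, hfin, heq⟩
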